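/- For a pair partition π of {1,…,k} (k even) and l < h(π), where h(π) := #{blocks {i,j} of π, i<j, with j = i+1 or π|_{{i+1,…,j−1}} a pair partition}, the set B_n^{(l)}(π) of π-consistent tuples with exactly l 'matched' blocks and all matched blocks nested satisfies #B_n^{(l)}(π) ≤ C·n^{k/2}, hence lim_{n→∞} #B_n^{(l)}(π)/n^{k/2+1} = 0. -/

import Mathlib

set_option linter.unusedSectionVars false

open Finset Filter
open Fin.NatCast

/-- `i ∼_π j`: `i` and `j` lie in the same block of the partition `π`. -/
def sameBlock {k : ℕ} (P : Finpartition (Finset.univ : Finset (Fin k))) (i j : Fin k) : Prop :=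
  ∃ b ∈ P.parts, i ∈ b ∧ j ∈ b

/-- `S_n(π)`: tuples `(p 1, …, p k) ∈ {1,…,n}^k` with
`p i + p (i+1) = p j + p (j+1) ↔ i ∼_π j` (indices cyclic). -/
def consistentSet (k n : ℕ) [NeZero k] (P : Finpartition (Finset.univ : Finset (Fin k))) :
    Set (Fin k → ℕ) :=
  {p | (∀ i, 1 ≤ p i ∧ p i ≤ n) ∧
    ∀ i j : Fin k, p i + p (i + 1) = p j + p (j + 1) ↔ sameBlock P i j}

/-- The restriction of `π` to the open interval `{i+1, …, j-1}` is a pair partition: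
every block meeting the interval is contained in it. -/
def interiorPaired {k : ℕ} (P : Finpartition (Finset.univ : Finset (Fin k)))
    (i j : Fin k) : Prop :=
  ∀ b ∈ P.parts, (∃ x ∈ b, (i : ℕ) < (x : ℕ) ∧ (x : ℕ) < (j : ℕ)) →
    ∀ x ∈ b, (i : ℕ) < (x : ℕ) ∧ (x : ℕ) < (j : ℕ)

/-- `P_i = P_j` or `P_i = P̄_j`, where `P_l = (p l, p (l+1))`. -/
def matchedPair {k : ℕ} [NeZero k] (p : Fin k → ℕ) (i j : Fin k) : Prop :=
  (p i = p j ∧ p (i + 1) = p (j + 1)) ∨ (p i = p (j + 1) ∧ p (i + 1) = p j)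

/-- `m(P_1,…,P_k)`: the number of matched index pairs `i < j`. -/
noncomputable def mcount {k : ℕ} [NeZero k] (p : Fin k → ℕ) : ℕ :=
  Set.ncard {ij : Fin k × Fin k | ij.1 < ij.2 ∧ matchedPair p ij.1 ij.2}

/-- All matched pairs are nested: `j = i+1` or `π|_{i+1,…,j-1}` is a pair partition. -/
def nestedMatches {k : ℕ} [NeZero k] (P : Finpartition (Finset.univ : Finset (Fin k)))
    (p : Fin k → ℕ) : Prop :=
  ∀ i j : Fin k, i < j → matchedPair p i j →
    ((j : ℕ) = (i : ℕ) + 1 ∨ interiorPaired P i j)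

/-- The height `h(π)`: the number of blocks `{i,j}`, `i < j`, with `j = i+1` or
`π|_{i+1,…,j-1}` a pair partition. -/
noncomputable def height {k : ℕ} (P : Finpartition (Finset.univ : Finset (Fin k))) : ℕ :=
  Set.ncard {b : Finset (Fin k) | b ∈ P.parts ∧ ∃ i j : Fin k, i < j ∧ b = {i, j} ∧
    ((j : ℕ) = (i : ℕ) + 1 ∨ interiorPaired P i j)}

/-- `B_n^(l)(π)`: π-consistent tuples with exactly `l` matched pairs, all nested. -/
def Bset (k n l : ℕ) [NeZero k] (P : Finpartition (Finset.univ : Finset (Fin k))) :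
    Set (Fin k → ℕ) :=
  {p | p ∈ consistentSet k n P ∧ mcount p = l ∧ nestedMatches P p}


section Stmt12Aux

variable {k : ℕ} [NeZero k]

private lemma finCastSucc (t : ℕ) : ((t + 1 : ℕ) : Fin k) = (t : Fin k) + 1 := by
  push_cast; ring

private lemma telescopeAux (p : Fin k → ℕ) {a b : ℕ} (hab : a ≤ b) :
    ∑ t ∈ Finset.Ico a b,
        ((-1 : ℤ)) ^ t * ((p ((t : ℕ) : Fin k) : ℤ) + (p ((t + 1 : ℕ) : Fin k) : ℤ)) =
      (-1) ^ a * (p ((a : ℕ) : Fin k) : ℤ) - (-1) ^ b * (p ((b : ℕ) : Fin k) : ℤ) := by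
  induction b, hab using Nat.le_induction with
  | base => simp
  | succ b hab ih =>
      rw [Finset.sum_Ico_succ_top hab, ih]
      ring

private lemma globalSumAux (hk : Even k) (p : Fin k → ℕ) :
    ∑ t ∈ Finset.range k,
        ((-1 : ℤ)) ^ t * ((p ((t : ℕ) : Fin k) : ℤ) + (p ((t + 1 : ℕ) : Fin k) : ℤ)) = 0 := by
  rw [Finset.range_eq_Ico, telescopeAux p (Nat.zero_le k)]
  simp [Fin.natCast_self, hk.neg_one_pow]

private lemma neg_one_pow_cancel {a b : ℕ} (h : ((-1 : ℤ)) ^ (a + b) = -1) :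
    ((-1 : ℤ)) ^ b = -((-1) ^ a) := by
  have hx : ((-1 : ℤ)) ^ a * (-1) ^ a = 1 := by
    rw [← pow_add]
    exact Even.neg_one_pow ⟨a, by ring⟩
  calc ((-1 : ℤ)) ^ b = ((-1 : ℤ) ^ a * (-1) ^ a) * (-1) ^ b := by rw [hx, one_mul]
    _ = (-1 : ℤ) ^ a * ((-1) ^ (a + b)) := by rw [pow_add]; ring
    _ = -((-1) ^ a) := by rw [h, mul_neg_one]

private lemma neg_one_pow_eq_of_even {a b : ℕ} (h : Even (a + b)) :
    ((-1 : ℤ)) ^ b = (-1) ^ a := by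
  have h1 : ((-1 : ℤ)) ^ (a + b) = 1 := h.neg_one_pow
  have hx : ((-1 : ℤ)) ^ a * (-1) ^ a = 1 := by
    rw [← pow_add]; exact Even.neg_one_pow ⟨a, by ring⟩
  calc ((-1 : ℤ)) ^ b = ((-1 : ℤ) ^ a * (-1) ^ a) * (-1) ^ b := by rw [hx, one_mul]
    _ = (-1 : ℤ) ^ a * ((-1) ^ (a + b)) := by rw [pow_add]; ring
    _ = (-1 : ℤ) ^ a := by rw [h1, mul_one]

private lemma partner_exists (P : Finpartition (Finset.univ : Finset (Fin k)))
    (hpair : ∀ b ∈ P.parts, b.card = 2) (x : Fin k) :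
    ∃ y : Fin k, y ≠ x ∧ P.part x = {x, y} := by
  have hmem := P.mem_part (Finset.mem_univ x)
  have hcard := hpair _ (P.part_mem.2 (Finset.mem_univ x))
  obtain ⟨a, c, hac, habc⟩ := Finset.card_eq_two.mp hcard
  rw [habc] at hmem
  rcases Finset.mem_insert.mp hmem with rfl | h
  · exact ⟨c, fun hcx => hac hcx.symm, habc⟩
  · have hxc : x = c := Finset.mem_singleton.mp h
    subst hxc
    exact ⟨a, fun hax => hac hax, by rw [habc, Finset.pair_comm]⟩

private lemma pair_min'_max' {i j : Fin k} (hij : i < j) :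
    ({i, j} : Finset (Fin k)).min' ⟨i, by simp⟩ = i ∧
    ({i, j} : Finset (Fin k)).max' ⟨i, by simp⟩ = j := by
  constructor
  · apply le_antisymm (Finset.min'_le _ _ (by simp))
    have h := Finset.min'_mem ({i, j} : Finset (Fin k)) ⟨i, by simp⟩
    rcases Finset.mem_insert.mp h with h' | h'
    · exact le_of_eq h'.symm
    · rw [Finset.mem_singleton.mp h']; exact hij.le
  · apply le_antisymm
    · have h := Finset.max'_mem ({i, j} : Finset (Fin k)) ⟨i, by simp⟩
      rcases Finset.mem_insert.mp h with h' | h'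
      · rw [h']; exact hij.le
      · exact le_of_eq (Finset.mem_singleton.mp h')
    · exact Finset.le_max' _ _ (by simp)


lemma hblock_matched (P : Finpartition (Finset.univ : Finset (Fin k)))
    (hpair : ∀ b ∈ P.parts, b.card = 2)
    (hodd : ∀ b ∈ P.parts, ∀ u ∈ b, ∀ v ∈ b, u ≠ v → Odd ((u : ℕ) + (v : ℕ)))
    (p : Fin k → ℕ)
    (hp2 : ∀ i j : Fin k, p i + p (i + 1) = p j + p (j + 1) ↔ sameBlock P i j)
    {i j : Fin k} (hij : i < j) (hb : ({i, j} : Finset (Fin k)) ∈ P.parts)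
    (hcond : (j : ℕ) = (i : ℕ) + 1 ∨ interiorPaired P i j) :
    matchedPair p i j := by
  classical
  have hsame : sameBlock P i j := ⟨{i, j}, hb, by simp, by simp⟩
  have hS : p i + p (i + 1) = p j + p (j + 1) := (hp2 i j).mpr hsame
  have hij' : (i : ℕ) < (j : ℕ) := hij
  have hjk : (j : ℕ) < k := j.isLt
  have hOddij : Odd ((i : ℕ) + (j : ℕ)) := hodd _ hb i (by simp) j (by simp) hij.ne
  choose pt hpt_ne hpt_eq using partner_exists P hpair
  have hpt_mem : ∀ x, pt x ∈ P.part x := fun x => by rw [hpt_eq x]; simp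
  have hpart_pt : ∀ x, P.part (pt x) = P.part x := fun x =>
    P.part_eq_of_mem (P.part_mem.2 (Finset.mem_univ x)) (hpt_mem x)
  have hpt_invol : ∀ x, pt (pt x) = x := by
    intro x
    have h1 : P.part (pt x) = {pt x, pt (pt x)} := hpt_eq (pt x)
    have h2 : x ∈ P.part (pt x) := by
      rw [hpart_pt]; exact P.mem_part (Finset.mem_univ x)
    rw [h1] at h2
    rcases Finset.mem_insert.mp h2 with h | h
    · exact absurd h.symm (hpt_ne x)
    · exact (Finset.mem_singleton.mp h).symm
  have hpt_same : ∀ x, sameBlock P x (pt x) :=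
    fun x => ⟨P.part x, P.part_mem.2 (Finset.mem_univ x), P.mem_part (Finset.mem_univ x), hpt_mem x⟩
  have hpt_odd : ∀ x : Fin k, Odd ((x : ℕ) + (pt x : ℕ)) := fun x =>
    hodd _ (P.part_mem.2 (Finset.mem_univ x)) x (P.mem_part (Finset.mem_univ x)) (pt x)
      (hpt_mem x) (hpt_ne x).symm
  set f : ℕ → ℤ :=
    fun t => (-1) ^ t * ((p ((t : ℕ) : Fin k) : ℤ) + (p ((t + 1 : ℕ) : Fin k) : ℤ)) with hf
  have hsum0 : ∑ t ∈ Finset.Ico ((i : ℕ) + 1) (j : ℕ), f t = 0 := by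
    rcases hcond with hji | hip
    · rw [hji]; simp
    · apply Finset.sum_involution (fun t _ => ((pt ((t : ℕ) : Fin k)) : ℕ))
      · -- cancellation
        intro t ht
        obtain ⟨ht1, ht2⟩ := Finset.mem_Ico.mp ht
        have htk : t < k := lt_trans ht2 hjk
        have hval : ((t : Fin k) : ℕ) = t := Fin.val_cast_of_lt htk
        set x : Fin k := (t : Fin k) with hx
        set y : Fin k := pt x with hy
        have hycast : (((y : ℕ) : ℕ) : Fin k) = y := Fin.cast_val_eq_self y
        have hSS : (p x : ℤ) + p (x + 1) = (p y : ℤ) + p (y + 1) := by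
          have := (hp2 x y).mpr (hpt_same x)
          exact_mod_cast this
        have hparity : ((-1 : ℤ)) ^ ((y : ℕ)) = -((-1) ^ t) := by
          have ho : Odd (t + (y : ℕ)) := by
            have := hpt_odd x; rwa [hval] at this
          exact neg_one_pow_cancel (Odd.neg_one_pow ho)
        show f t + f (y : ℕ) = 0
        have e1 : f t = (-1) ^ t * ((p x : ℤ) + p (x + 1)) := by
          rw [hf]; simp only []
          rw [finCastSucc t]
        have e2 : f (y : ℕ) = (-1) ^ ((y : ℕ)) * ((p y : ℤ) + p (y + 1)) := by
          rw [hf]; simp only []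
          rw [finCastSucc (y : ℕ), hycast]
        rw [e1, e2, hparity, hSS]; ring
      · -- g ≠ id
        intro t ht _
        obtain ⟨ht1, ht2⟩ := Finset.mem_Ico.mp ht
        have htk : t < k := lt_trans ht2 hjk
        have hval : ((t : Fin k) : ℕ) = t := Fin.val_cast_of_lt htk
        intro hcontra
        apply hpt_ne ((t : ℕ) : Fin k)
        apply Fin.val_injective
        rw [hcontra, hval]
      · -- membership
        intro t ht
        obtain ⟨ht1, ht2⟩ := Finset.mem_Ico.mp ht
        have htk : t < k := lt_trans ht2 hjk
        have hval : ((t : Fin k) : ℕ) = t := Fin.val_cast_of_lt htk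
        have hint := hip (P.part ((t : ℕ) : Fin k)) (P.part_mem.2 (Finset.mem_univ _))
          ⟨((t : ℕ) : Fin k), P.mem_part (Finset.mem_univ _), by rw [hval]; omega⟩
        have := hint (pt ((t : ℕ) : Fin k)) (hpt_mem _)
        exact Finset.mem_Ico.mpr ⟨by omega, this.2⟩
      · -- involution
        intro t ht
        have hycast := Fin.cast_val_eq_self (pt ((t : ℕ) : Fin k))
        obtain ⟨ht1, ht2⟩ := Finset.mem_Ico.mp ht
        have htk : t < k := lt_trans ht2 hjk
        have hval : ((t : Fin k) : ℕ) = t := Fin.val_cast_of_lt htk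
        show ((pt (((pt ((t : ℕ) : Fin k) : ℕ) : ℕ) : Fin k)) : ℕ) = t
        rw [hycast, hpt_invol, hval]
  have htel := telescopeAux p (show (i : ℕ) + 1 ≤ (j : ℕ) from hij')
  have hFF : (-1 : ℤ) ^ ((i : ℕ) + 1) * (p (((i : ℕ) + 1 : ℕ) : Fin k) : ℤ) =
      (-1) ^ ((j : ℕ)) * (p (((j : ℕ) : ℕ) : Fin k) : ℤ) := by
    have h0 : (0 : ℤ) = (-1) ^ ((i : ℕ) + 1) * (p (((i : ℕ) + 1 : ℕ) : Fin k) : ℤ) -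
        (-1) ^ ((j : ℕ)) * (p (((j : ℕ) : ℕ) : Fin k) : ℤ) := by
      rw [← htel]; exact hsum0.symm
    linarith
  have hpar : (-1 : ℤ) ^ ((i : ℕ) + 1) = (-1) ^ ((j : ℕ)) := by
    have h1 := neg_one_pow_cancel (Odd.neg_one_pow hOddij)
    rw [pow_succ, h1]; ring
  have hpij : p (i + 1) = p j := by
    have hne : ((-1 : ℤ)) ^ ((j : ℕ)) ≠ 0 := pow_ne_zero _ (by norm_num)
    have hcc : (p (((i : ℕ) + 1 : ℕ) : Fin k) : ℤ) = (p (((j : ℕ) : ℕ) : Fin k) : ℤ) := by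
      apply mul_left_cancel₀ hne
      rw [← hpar] at hFF ⊢
      exact hFF
    rw [finCastSucc, Fin.cast_val_eq_self, Fin.cast_val_eq_self] at hcc
    exact_mod_cast hcc
  refine Or.inr ⟨?_, hpij⟩
  omega

lemma height_le_mcount (P : Finpartition (Finset.univ : Finset (Fin k)))
    (p : Fin k → ℕ)
    (hmatch : ∀ i j : Fin k, i < j → ({i, j} : Finset (Fin k)) ∈ P.parts →
      ((j : ℕ) = (i : ℕ) + 1 ∨ interiorPaired P i j) → matchedPair p i j) :
    height P ≤ mcount p := by
  classical
  apply Set.ncard_le_ncard_of_injOn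
    (fun b : Finset (Fin k) => if h : b.Nonempty then (b.min' h, b.max' h) else (0, 0))
  · rintro b ⟨hb, i, j, hij, rfl, hcond⟩
    have hne : ({i, j} : Finset (Fin k)).Nonempty := ⟨i, by simp⟩
    rw [dif_pos hne]
    obtain ⟨hmin, hmax⟩ := pair_min'_max' hij
    have hmin' : ({i, j} : Finset (Fin k)).min' hne = i := hmin
    have hmax' : ({i, j} : Finset (Fin k)).max' hne = j := hmax
    rw [hmin', hmax']
    exact ⟨hij, hmatch i j hij hb hcond⟩
  · rintro b1 ⟨hb1, i1, j1, hij1, rfl, _⟩ b2 ⟨hb2, i2, j2, hij2, rfl, _⟩ heq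
    have hne1 : ({i1, j1} : Finset (Fin k)).Nonempty := ⟨i1, by simp⟩
    have hne2 : ({i2, j2} : Finset (Fin k)).Nonempty := ⟨i2, by simp⟩
    dsimp only at heq
    rw [dif_pos hne1, dif_pos hne2] at heq
    obtain ⟨hmin1, hmax1⟩ := pair_min'_max' hij1
    obtain ⟨hmin2, hmax2⟩ := pair_min'_max' hij2
    have e1 : (({i1, j1} : Finset (Fin k)).min' hne1, ({i1, j1} : Finset (Fin k)).max' hne1)
        = (i1, j1) := by rw [show ({i1, j1} : Finset (Fin k)).min' hne1 = i1 from hmin1,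
          show ({i1, j1} : Finset (Fin k)).max' hne1 = j1 from hmax1]
    have e2 : (({i2, j2} : Finset (Fin k)).min' hne2, ({i2, j2} : Finset (Fin k)).max' hne2)
        = (i2, j2) := by rw [show ({i2, j2} : Finset (Fin k)).min' hne2 = i2 from hmin2,
          show ({i2, j2} : Finset (Fin k)).max' hne2 = j2 from hmax2]
    rw [e1, e2] at heq
    have h1 : i1 = i2 := (Prod.ext_iff.mp heq).1
    have h2 : j1 = j2 := (Prod.ext_iff.mp heq).2
    rw [h1, h2]


lemma parts_card_eq {m : ℕ} [NeZero (2*m)] (P : Finpartition (Finset.univ : Finset (Fin (2*m))))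
    (hpair : ∀ b ∈ P.parts, b.card = 2) : P.parts.card = m := by
  have h1 : ∑ b ∈ P.parts, b.card = (Finset.univ : Finset (Fin (2*m))).card :=
    P.sum_card_parts
  have h2 : ∑ b ∈ P.parts, b.card = 2 * P.parts.card := by
    rw [Finset.sum_congr rfl hpair, Finset.sum_const, smul_eq_mul, mul_comm]
  rw [h2, Finset.card_univ, Fintype.card_fin] at h1
  omega

lemma caseB_count (m n : ℕ) [NeZero (2*m)]
    (P : Finpartition (Finset.univ : Finset (Fin (2*m))))
    (hpair : ∀ b ∈ P.parts, b.card = 2)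
    {u v : Fin (2*m)} (huv : u ≠ v)
    (hb : ({u, v} : Finset (Fin (2*m))) ∈ P.parts)
    (heven : Even ((u : ℕ) + (v : ℕ)))
    (S : Set (Fin (2*m) → ℕ)) (hS : S ⊆ consistentSet (2*m) n P) :
    S.ncard ≤ n * (2*n+1)^(m-1) := by
  classical
  set rep : Finset (Fin (2*m)) → Fin (2*m) :=
    fun b => if h : b.Nonempty then b.min' h else 0 with hrepdef
  set T : Finset (Fin (2*m)) := (P.parts.erase {u, v}).image rep with hTdef
  set G := (Finset.Icc 1 n) ×ˢ Fintype.piFinset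
      (fun x : Fin (2*m) => if x ∈ T then Finset.Icc 0 (2*n) else ({0} : Finset ℕ)) with hGdef
  have hmain : S.ncard ≤ G.card := by
    rw [← Set.ncard_coe_finset]
    apply Set.ncard_le_ncard_of_injOn
      (fun p : Fin (2*m) → ℕ => (p 0, fun x => if x ∈ T then p x + p (x + 1) else 0))
    · intro p hp
      obtain ⟨hp1, hp2⟩ := hS hp
      simp only [Finset.mem_coe, hGdef, Finset.mem_product, Fintype.mem_piFinset]
      constructor
      · exact Finset.mem_Icc.mpr ⟨(hp1 0).1, (hp1 0).2⟩
      · intro x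
        by_cases hx : x ∈ T
        · simp only [hx, if_true, Finset.mem_Icc]
          exact ⟨Nat.zero_le _, by have := (hp1 x).2; have := (hp1 (x+1)).2; omega⟩
        · simp [hx]
    · intro p hp q hq heq
      obtain ⟨hp1, hp2⟩ := hS hp
      obtain ⟨hq1, hq2⟩ := hS hq
      dsimp only at heq
      have hE0 : p 0 = q 0 := congrArg Prod.fst heq
      have hE1 : ∀ x ∈ T, p x + p (x + 1) = q x + q (x + 1) := by
        intro x hx
        have h2 := congrArg (fun z : ℕ × (Fin (2*m) → ℕ) => z.2 x) heq
        dsimp only at h2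
        rwa [if_pos hx, if_pos hx] at h2
      have hsame_part : ∀ x y : Fin (2*m), y ∈ P.part x → sameBlock P x y :=
        fun x y hy => ⟨P.part x, P.part_mem.2 (Finset.mem_univ x),
          P.mem_part (Finset.mem_univ x), hy⟩
      have hS_nb : ∀ x : Fin (2*m), P.part x ≠ {u, v} →
          p x + p (x + 1) = q x + q (x + 1) := by
        intro x hxb
        have hne : (P.part x).Nonempty := ⟨x, P.mem_part (Finset.mem_univ x)⟩
        have hrepmem : rep (P.part x) ∈ P.part x := by
          rw [hrepdef]; dsimp only; rw [dif_pos hne]; exact Finset.min'_mem _ _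
        have hrepT : rep (P.part x) ∈ T :=
          Finset.mem_image_of_mem rep
            (Finset.mem_erase.mpr ⟨hxb, P.part_mem.2 (Finset.mem_univ x)⟩)
        have h1 : p x + p (x + 1) = p (rep (P.part x)) + p (rep (P.part x) + 1) :=
          (hp2 _ _).mpr (hsame_part _ _ hrepmem)
        have h2 : q x + q (x + 1) = q (rep (P.part x)) + q (rep (P.part x) + 1) :=
          (hq2 _ _).mpr (hsame_part _ _ hrepmem)
        have h3 := hE1 _ hrepT
        omega
      -- the block {u,v} value is also determined
      have hsb_uv : ∀ x : Fin (2*m), x ∈ ({u, v} : Finset (Fin (2*m))) → sameBlock P x u :=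
        fun x hx => ⟨{u, v}, hb, hx, by simp⟩
      have hSu : p u + p (u + 1) = q u + q (u + 1) := by
        have hglp := globalSumAux (⟨m, by ring⟩ : Even (2*m)) p
        have hglq := globalSumAux (⟨m, by ring⟩ : Even (2*m)) q
        set A : Finset ℕ := {(u : ℕ), (v : ℕ)} with hAdef
        have hvne : (u : ℕ) ≠ (v : ℕ) := fun h => huv (Fin.val_injective h)
        have hAsub : A ⊆ Finset.range (2*m) := by
          intro t ht
          rcases Finset.mem_insert.mp ht with rfl | ht'
          · exact Finset.mem_range.mpr u.isLt
          · rw [Finset.mem_singleton.mp ht']; exact Finset.mem_range.mpr v.isLt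
        have hsplit : ∀ r : Fin (2*m) → ℕ,
            ∑ t ∈ Finset.range (2*m),
              ((-1 : ℤ)) ^ t * ((r ((t : ℕ) : Fin (2*m)) : ℤ) + (r ((t + 1 : ℕ) : Fin (2*m)) : ℤ))
            = (∑ t ∈ Finset.range (2*m) \ A,
                ((-1 : ℤ)) ^ t * ((r ((t : ℕ) : Fin (2*m)) : ℤ) + (r ((t + 1 : ℕ) : Fin (2*m)) : ℤ)))
              + (((-1 : ℤ)) ^ ((u : ℕ)) * ((r u : ℤ) + (r (u + 1) : ℤ))
                 + ((-1 : ℤ)) ^ ((v : ℕ)) * ((r v : ℤ) + (r (v + 1) : ℤ))) := by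
          intro r
          rw [← Finset.sum_sdiff hAsub]
          congr 1
          rw [hAdef, Finset.sum_pair hvne]
          congr 2 <;>
            rw [finCastSucc, Fin.cast_val_eq_self]
        have hrest : ∑ t ∈ Finset.range (2*m) \ A,
              ((-1 : ℤ)) ^ t * ((p ((t : ℕ) : Fin (2*m)) : ℤ) + (p ((t + 1 : ℕ) : Fin (2*m)) : ℤ))
            = ∑ t ∈ Finset.range (2*m) \ A,
              ((-1 : ℤ)) ^ t * ((q ((t : ℕ) : Fin (2*m)) : ℤ) + (q ((t + 1 : ℕ) : Fin (2*m)) : ℤ)) := by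
          apply Finset.sum_congr rfl
          intro t ht
          obtain ⟨htr, htA⟩ := Finset.mem_sdiff.mp ht
          have htk : t < 2*m := Finset.mem_range.mp htr
          have hval : (((t : ℕ) : Fin (2*m)) : ℕ) = t := Fin.val_cast_of_lt htk
          have hxb : P.part ((t : ℕ) : Fin (2*m)) ≠ {u, v} := by
            intro hcontra
            have hmem : ((t : ℕ) : Fin (2*m)) ∈ ({u, v} : Finset (Fin (2*m))) := by
              rw [← hcontra]; exact P.mem_part (Finset.mem_univ _)
            apply htA
            rcases Finset.mem_insert.mp hmem with h | h
            · rw [hAdef]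
              have : t = (u : ℕ) := by rw [← hval, h]
              rw [this]; exact Finset.mem_insert_self _ _
            · rw [hAdef]
              have : t = (v : ℕ) := by rw [← hval, Finset.mem_singleton.mp h]
              rw [this]; exact Finset.mem_insert_of_mem (Finset.mem_singleton_self _)
          have hst := hS_nb _ hxb
          rw [finCastSucc t]
          rw [show ((p ((t : ℕ) : Fin (2*m)) : ℤ) + (p (((t : ℕ) : Fin (2*m)) + 1) : ℤ))
              = ((q ((t : ℕ) : Fin (2*m)) : ℤ) + (q (((t : ℕ) : Fin (2*m)) + 1) : ℤ)) from by
            exact_mod_cast hst]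
        have hSpv : p v + p (v + 1) = p u + p (u + 1) :=
          (hp2 _ _).mpr (hsb_uv v (by simp))
        have hSqv : q v + q (v + 1) = q u + q (u + 1) :=
          (hq2 _ _).mpr (hsb_uv v (by simp))
        have hpar : ((-1 : ℤ)) ^ ((v : ℕ)) = (-1) ^ ((u : ℕ)) := neg_one_pow_eq_of_even heven
        rw [hsplit p] at hglp
        rw [hsplit q] at hglq
        rw [hrest] at hglp
        rw [hpar] at hglp hglq
        have hcast_pv : ((p v : ℤ) + (p (v+1) : ℤ)) = ((p u : ℤ) + (p (u+1) : ℤ)) := by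
          exact_mod_cast hSpv
        have hcast_qv : ((q v : ℤ) + (q (v+1) : ℤ)) = ((q u : ℤ) + (q (u+1) : ℤ)) := by
          exact_mod_cast hSqv
        rw [hcast_pv] at hglp
        rw [hcast_qv] at hglq
        have hεne : ((-1 : ℤ)) ^ ((u : ℕ)) ≠ 0 := pow_ne_zero _ (by norm_num)
        have h2 : ((-1 : ℤ)) ^ ((u : ℕ)) * (2 * ((p u : ℤ) + (p (u+1) : ℤ)))
            = ((-1 : ℤ)) ^ ((u : ℕ)) * (2 * ((q u : ℤ) + (q (u+1) : ℤ))) := by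
          linarith
        have h3 := mul_left_cancel₀ hεne h2
        have h4 : ((p u : ℤ) + (p (u+1) : ℤ)) = ((q u : ℤ) + (q (u+1) : ℤ)) := by linarith
        exact_mod_cast h4
      have hSall : ∀ x : Fin (2*m), p x + p (x + 1) = q x + q (x + 1) := by
        intro x
        by_cases hxb : P.part x = {u, v}
        · have hmem : x ∈ ({u, v} : Finset (Fin (2*m))) := by
            rw [← hxb]; exact P.mem_part (Finset.mem_univ x)
          have h1 : p x + p (x + 1) = p u + p (u + 1) := (hp2 _ _).mpr (hsb_uv x hmem)
          have h2 : q x + q (x + 1) = q u + q (u + 1) := (hq2 _ _).mpr (hsb_uv x hmem)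
          omega
        · exact hS_nb x hxb
      have hind : ∀ t : ℕ, p ((t : ℕ) : Fin (2*m)) = q ((t : ℕ) : Fin (2*m)) := by
        intro t
        induction t with
        | zero => simpa using hE0
        | succ t ih =>
            have h1 := hSall ((t : ℕ) : Fin (2*m))
            rw [finCastSucc]
            omega
      funext x
      have := hind ((x : ℕ))
      rwa [Fin.cast_val_eq_self] at this
  have hGcard : G.card = n * (2*n+1)^(T.card) := by
    rw [hGdef, Finset.card_product, Fintype.card_piFinset]
    congr 1
    · simp [Nat.card_Icc]
    calc ∏ x : Fin (2*m), (if x ∈ T then Finset.Icc 0 (2*n) else ({0} : Finset ℕ)).card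
        = ∏ x : Fin (2*m), (if x ∈ T then 2*n+1 else 1) := by
          apply Finset.prod_congr rfl; intro x _; split <;> simp [Nat.card_Icc]
      _ = (∏ x ∈ Finset.univ.filter (· ∈ T), (if x ∈ T then 2*n+1 else 1)) *
          (∏ x ∈ Finset.univ.filter (¬ · ∈ T), (if x ∈ T then 2*n+1 else 1)) :=
          (Finset.prod_filter_mul_prod_filter_not _ _ _).symm
      _ = (2*n+1)^(T.card) := by
          rw [Finset.filter_univ_mem]
          rw [Finset.prod_congr rfl (fun x hx => if_pos hx),
            Finset.prod_const]
          rw [Finset.prod_congr rfl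
            (fun x hx => if_neg (by simpa using (Finset.mem_filter.mp hx).2)),
            Finset.prod_const, one_pow, mul_one]
  have hTcard : T.card ≤ m - 1 := by
    have h1 : T.card ≤ (P.parts.erase {u, v}).card := Finset.card_image_le
    rw [Finset.card_erase_of_mem hb, parts_card_eq P hpair] at h1
    exact h1
  calc S.ncard ≤ G.card := hmain
    _ = n * (2*n+1)^(T.card) := hGcard
    _ ≤ n * (2*n+1)^(m-1) :=
        Nat.mul_le_mul_left _ (Nat.pow_le_pow_right (by omega) hTcard)


end Stmt12Aux

/-- For a pair partition `π` of `{1,…,k}`, `k = 2m`, and `l < h(π)`,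
`#B_n^(l)(π) ≤ C n^(k/2)`, hence `#B_n^(l)(π)/n^(k/2+1) → 0`. -/
theorem stmt12 (m : ℕ) [NeZero (2 * m)]
    (P : Finpartition (Finset.univ : Finset (Fin (2 * m))))
    (hpair : ∀ b ∈ P.parts, b.card = 2)
    (l : ℕ) (hl : l < height P) :
    (∃ C : ℝ, ∀ n : ℕ, ((Bset (2 * m) n l P).ncard : ℝ) ≤ C * (n : ℝ) ^ m) ∧
      Tendsto (fun n : ℕ => ((Bset (2 * m) n l P).ncard : ℝ) / (n : ℝ) ^ (m + 1))
        atTop (nhds 0) := by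
  classical
  have hm0 : m ≠ 0 := by
    have h := NeZero.ne (2*m); omega
  have key : ∀ n : ℕ, (Bset (2*m) n l P).ncard ≤ 3^m * n^m := by
    intro n
    by_cases hodd : ∀ b ∈ P.parts, ∀ u ∈ b, ∀ v ∈ b, u ≠ v → Odd ((u : ℕ) + (v : ℕ))
    · have hempty : Bset (2*m) n l P = ∅ := by
        rw [Set.eq_empty_iff_forall_notMem]
        rintro p ⟨⟨hp1, hp2⟩, hmeq, hnest⟩
        have hmatch : ∀ i j : Fin (2*m), i < j →
            ({i, j} : Finset (Fin (2*m))) ∈ P.parts →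
            ((j : ℕ) = (i : ℕ) + 1 ∨ interiorPaired P i j) → matchedPair p i j :=
          fun i j hij hb hcond => hblock_matched P hpair hodd p hp2 hij hb hcond
        have hle := height_le_mcount P p hmatch
        omega
      rw [hempty]; simp
    · push_neg at hodd
      obtain ⟨b, hbmem, u, hu, v, hv, huv, hnodd⟩ := hodd
      have heven : Even ((u : ℕ) + (v : ℕ)) := Nat.not_odd_iff_even.mp hnodd
      have hbeq : ({u, v} : Finset (Fin (2*m))) = b := by
        apply Finset.eq_of_subset_of_card_le
        · intro x hx
          rcases Finset.mem_insert.mp hx with rfl | hx'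
          · exact hu
          · rw [Finset.mem_singleton.mp hx']; exact hv
        · rw [hpair b hbmem, Finset.card_pair huv]
      have hb2 : ({u, v} : Finset (Fin (2*m))) ∈ P.parts := hbeq ▸ hbmem
      rcases Nat.eq_zero_or_pos n with rfl | hn
      · have hempty : Bset (2*m) 0 l P = ∅ := by
          rw [Set.eq_empty_iff_forall_notMem]
          rintro p ⟨⟨hp1, _⟩, _, _⟩
          have := hp1 0; omega
        rw [hempty]; simp
      · have hsub : Bset (2*m) n l P ⊆ consistentSet (2*m) n P := fun p hp => hp.1
        have h1 := caseB_count m n P hpair huv hb2 heven _ hsub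
        calc (Bset (2*m) n l P).ncard ≤ n * (2*n+1)^(m-1) := h1
          _ ≤ n * (3*n)^(m-1) :=
              Nat.mul_le_mul_left _ (Nat.pow_le_pow_left (by omega) _)
          _ = 3^(m-1) * (n * n^(m-1)) := by rw [mul_pow]; ring
          _ = 3^(m-1) * n^m := by
              congr 1
              rw [← pow_succ']
              congr 1
              omega
          _ ≤ 3^m * n^m :=
              Nat.mul_le_mul_right _ (Nat.pow_le_pow_right (by norm_num) (Nat.sub_le m 1))
  have keyR : ∀ n : ℕ, ((Bset (2*m) n l P).ncard : ℝ) ≤ (3:ℝ)^m * (n : ℝ)^m := by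
    intro n
    calc ((Bset (2*m) n l P).ncard : ℝ) ≤ ((3^m * n^m : ℕ) : ℝ) := by
          exact_mod_cast key n
      _ = (3:ℝ)^m * (n : ℝ)^m := by push_cast; ring
  constructor
  · exact ⟨(3:ℝ)^m, keyR⟩
  · apply squeeze_zero' (g := fun n : ℕ => ((3:ℝ)^m) / n)
    · exact Eventually.of_forall fun n =>
        div_nonneg (Nat.cast_nonneg _) (pow_nonneg (Nat.cast_nonneg _) _)
    · filter_upwards [eventually_ge_atTop 1] with n hn
      have hnpos : (0 : ℝ) < (n : ℝ) := by
        have : (1 : ℝ) ≤ (n : ℝ) := by exact_mod_cast hn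
        linarith
      have hppos : (0 : ℝ) < (n : ℝ)^(m+1) := pow_pos hnpos _
      rw [div_le_div_iff₀ hppos hnpos]
      calc ((Bset (2*m) n l P).ncard : ℝ) * (n : ℝ)
          ≤ ((3:ℝ)^m * (n : ℝ)^m) * (n : ℝ) :=
            mul_le_mul_of_nonneg_right (keyR n) (le_of_lt hnpos)
        _ = (3:ℝ)^m * (n : ℝ)^(m+1) := by ring
    · exact tendsto_const_div_atTop_nhds_zero_nat _
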